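/- arXiv:1010.0670 — 3 statements merged into one kernel-verified Lean document; each statement's English description precedes it below -/
import Mathlib

section
/- Let 𝒳 and 𝒴 be finite nonempty sets, n ≥ 2 and m positive integers with m ≤ n, and x ∈ 𝒳ⁿ, y ∈ 𝒴ⁿ arbitrary deterministic sequences. Let I be a uniformly random m-element subset of {1,…,n}, and define the joint type estimate P̂_I(a,b) := |{i ∈ I : (x_i,y_i) = (a,b)}|/m. Then the mean squared error summed over all symbol pairs satisfies Σ_{(a,b) ∈ 𝒳×𝒴} E[(P̂_I(a,b) − P_{x,y}(a,b))²] ≤ 1/m. -/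
open Finset

lemma count_superset {n : ℕ} (m : ℕ) (t : Finset (Fin n)) (h : t.card ≤ m) :
    ((powersetCard m (univ : Finset (Fin n))).filter (fun I => t ⊆ I)).card
      = (n - t.card).choose (m - t.card) := by
  have hc : (tᶜ : Finset (Fin n)).card = n - t.card := by
    simp [Finset.card_compl]
  rw [← hc, ← Finset.card_powersetCard]
  apply Finset.card_bij' (fun I _ => I \ t) (fun J _ => J ∪ t)
  · intro I hI
    simp only [mem_filter, mem_powersetCard] at hI
    rw [mem_powersetCard]
    constructor
    · intro a ha; simp only [mem_sdiff] at ha; simp [ha.2]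
    · rw [card_sdiff_of_subset hI.2, hI.1.2]
  · intro J hJ
    rw [mem_powersetCard] at hJ
    have hdisj : Disjoint J t := by
      rw [Finset.disjoint_right]; intro a hat haJ
      have := hJ.1 haJ; simp at this; exact this hat
    simp only [mem_filter, mem_powersetCard]
    refine ⟨⟨subset_univ _, ?_⟩, subset_union_right⟩
    rw [card_union_of_disjoint hdisj, hJ.2, Nat.sub_add_cancel h]
  · intro I hI
    simp only [mem_filter, mem_powersetCard] at hI
    exact sdiff_union_of_subset hI.2
  · intro J hJ
    rw [mem_powersetCard] at hJ
    apply union_sdiff_cancel_right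
    rw [Finset.disjoint_right]; intro a hat haJ
    have := hJ.1 haJ; simp at this; exact this hat

lemma algebra_diff (k n m N : ℝ) (hn0 : n ≠ 0) (hm0 : m ≠ 0) (hn1 : n - 1 ≠ 0) :
    k/(n*m) * N
      - ((k * (m * N / n) + (k^2 - k) * (m * (m-1) * N / (n * (n-1))))/m^2
        - 2*(k/n)/m * (k * (m * N / n)) + N * (k/n)^2)
      = N * (k^2 * (n-1) * m - k * (k-1) * (m-1) * n) / (n^2 * (n-1) * m) := by
  field_simp
  ring

set_option maxHeartbeats 1000000 in
lemma per_set {n m : ℕ} (hn : 2 ≤ n) (hm : 0 < m) (hmn : m ≤ n) (S : Finset (Fin n)) :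
    (∑ I ∈ powersetCard m (univ : Finset (Fin n)),
        (((I ∩ S).card : ℝ)/(m : ℝ) - (S.card : ℝ)/(n : ℝ))^2) / (n.choose m : ℝ)
      ≤ (S.card : ℝ) / ((n : ℝ)*(m : ℝ)) := by
  classical
  set P := powersetCard m (univ : Finset (Fin n)) with hP
  set k : ℕ := S.card with hk
  set c1 : ℕ := (n-1).choose (m-1) with hc1
  set c2 : ℕ := if 2 ≤ m then (n-2).choose (m-2) else 0 with hc2
  have hPcard : P.card = n.choose m := by
    rw [hP, card_powersetCard, card_univ, Fintype.card_fin]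
  have hX : ∀ I : Finset (Fin n), ((I ∩ S).card : ℝ) = ∑ i ∈ S, if i ∈ I then (1:ℝ) else 0 := by
    intro I
    have h1 : I ∩ S = S.filter (fun i => i ∈ I) := by ext i; simp [and_comm]
    rw [h1, card_filter]
    push_cast
    rfl
  -- single counts
  have hcount1 : ∀ i : Fin n, (P.filter (fun I => i ∈ I)).card = c1 := by
    intro i
    have := count_superset m ({i} : Finset (Fin n)) (by simp only [card_singleton]; exact hm)
    simp only [card_singleton, singleton_subset_iff] at this
    exact this
  have hcount2 : ∀ i j : Fin n, j ≠ i → (P.filter (fun I => i ∈ I ∧ j ∈ I)).card = c2 := by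
    intro i j hij
    by_cases h2 : 2 ≤ m
    · have hcard : ({i, j} : Finset (Fin n)).card = 2 := card_pair (Ne.symm hij)
      have := count_superset m ({i, j} : Finset (Fin n)) (by rw [hcard]; exact h2)
      simp only [hcard, insert_subset_iff, singleton_subset_iff] at this
      rw [hc2, if_pos h2, ← this]
    · have hm1 : m = 1 := by omega
      rw [hc2, if_neg h2]
      rw [Finset.card_eq_zero, Finset.filter_eq_empty_iff]
      intro I hI
      rw [hP, mem_powersetCard] at hI
      rintro ⟨hiI, hjI⟩
      have : ({i, j} : Finset (Fin n)).card ≤ I.card := by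
        apply card_le_card
        intro a ha
        simp only [mem_insert, mem_singleton] at ha
        rcases ha with rfl | rfl <;> assumption
      rw [card_pair (Ne.symm hij), hI.2, hm1] at this
      omega
  -- sum identities (real)
  have hsum1 : ∑ I ∈ P, ((I ∩ S).card : ℝ) = (k : ℝ) * (c1 : ℝ) := by
    simp_rw [hX]
    rw [Finset.sum_comm]
    have h1 : ∀ i ∈ S, (∑ I ∈ P, if i ∈ I then (1:ℝ) else 0) = (c1 : ℝ) := by
      intro i _
      rw [Finset.sum_boole, hcount1 i]
    rw [Finset.sum_congr rfl h1, sum_const, nsmul_eq_mul]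
  have hsum2 : ∑ I ∈ P, ((I ∩ S).card : ℝ)^2
      = (k : ℝ) * (c1 : ℝ) + ((k : ℝ)^2 - (k : ℝ)) * (c2 : ℝ) := by
    have expand : ∀ I : Finset (Fin n), ((I ∩ S).card : ℝ)^2
        = ∑ i ∈ S, ∑ j ∈ S, (if i ∈ I then (1:ℝ) else 0) * (if j ∈ I then (1:ℝ) else 0) := by
      intro I
      rw [hX, sq, Finset.sum_mul_sum]
    simp_rw [expand]
    rw [Finset.sum_comm]
    have h1 : ∀ i ∈ S, (∑ I ∈ P, ∑ j ∈ S, (if i ∈ I then (1:ℝ) else 0) * (if j ∈ I then (1:ℝ) else 0))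
        = (c1 : ℝ) + ((k : ℝ) - 1) * (c2 : ℝ) := by
      intro i hi
      rw [Finset.sum_comm]
      have h2 : ∀ j ∈ S, (∑ I ∈ P, (if i ∈ I then (1:ℝ) else 0) * (if j ∈ I then (1:ℝ) else 0))
          = if j = i then (c1 : ℝ) else (c2 : ℝ) := by
        intro j _
        have h3 : ∀ I : Finset (Fin n), (if i ∈ I then (1:ℝ) else 0) * (if j ∈ I then (1:ℝ) else 0)
            = if i ∈ I ∧ j ∈ I then (1:ℝ) else 0 := by
          intro I; split_ifs with h h' h'' <;> simp_all
        simp_rw [h3]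
        rw [Finset.sum_boole]
        by_cases hji : j = i
        · subst hji
          rw [if_pos rfl]
          simp only [and_self]
          exact_mod_cast congrArg (Nat.cast : ℕ → ℝ) (hcount1 j)
        · rw [if_neg hji]
          exact_mod_cast congrArg (Nat.cast : ℕ → ℝ) (hcount2 i j hji)
      rw [Finset.sum_congr rfl h2]
      have h4 : ∀ j ∈ S, (if j = i then (c1 : ℝ) else (c2 : ℝ))
          = (if j = i then (c1 : ℝ) - c2 else 0) + c2 := by
        intro j _; split_ifs <;> ring
      rw [Finset.sum_congr rfl h4, Finset.sum_add_distrib, Finset.sum_ite_eq' S i,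
        if_pos hi, sum_const, nsmul_eq_mul]
      ring
    rw [Finset.sum_congr rfl h1, sum_const, nsmul_eq_mul]
    ring
  -- choose relations
  have hN : (0:ℝ) < (n.choose m : ℝ) := by
    exact_mod_cast Nat.choose_pos hmn
  have hrel1 : (n : ℝ) * (c1 : ℝ) = (m : ℝ) * (n.choose m : ℝ) := by
    have hnat : n * c1 = n.choose m * m := by
      rw [hc1]
      have h := Nat.add_one_mul_choose_eq (n-1) (m-1)
      have en : n - 1 + 1 = n := by omega
      have em : m - 1 + 1 = m := by omega
      rw [en, em] at h
      exact h
    exact_mod_cast hnat.trans (Nat.mul_comm _ _)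
  have hrel2 : (n : ℝ) * ((n : ℝ) - 1) * (c2 : ℝ)
      = (m : ℝ) * ((m : ℝ) - 1) * (n.choose m : ℝ) := by
    by_cases h2 : 2 ≤ m
    · have e1 : (n-1) * c2 = (m-1) * c1 := by
        rw [hc1, hc2, if_pos h2]
        have h := Nat.add_one_mul_choose_eq (n-2) (m-2)
        have en : n - 2 + 1 = n - 1 := by omega
        have em : m - 2 + 1 = m - 1 := by omega
        rw [en, em] at h
        rw [h, Nat.mul_comm]
      have e1R : ((n : ℝ) - 1) * (c2 : ℝ) = ((m : ℝ) - 1) * (c1 : ℝ) := by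
        have h1 : ((n-1 : ℕ) : ℝ) = (n : ℝ) - 1 := by
          push_cast [Nat.cast_sub (by omega : 1 ≤ n)]; ring
        have h2' : ((m-1 : ℕ) : ℝ) = (m : ℝ) - 1 := by
          push_cast [Nat.cast_sub (by omega : 1 ≤ m)]; ring
        have := congrArg (fun z : ℕ => (z : ℝ)) e1
        push_cast at this
        rw [Nat.cast_sub (by omega : 1 ≤ n), Nat.cast_sub (by omega : 1 ≤ m)] at this
        simpa using this
      calc (n : ℝ) * ((n : ℝ) - 1) * (c2 : ℝ) = ((m : ℝ) - 1) * ((n : ℝ) * (c1 : ℝ)) := by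
            rw [mul_assoc, e1R]; ring
        _ = (m : ℝ) * ((m : ℝ) - 1) * (n.choose m : ℝ) := by rw [hrel1]; ring
    · have hm1 : m = 1 := by omega
      rw [hc2, if_neg h2]
      subst hm1
      norm_num
  -- expand the square
  have hq : ∑ I ∈ P, (((I ∩ S).card : ℝ)/(m : ℝ) - (k : ℝ)/(n : ℝ))^2
      = (∑ I ∈ P, ((I ∩ S).card : ℝ)^2)/(m:ℝ)^2
        - 2*((k:ℝ)/(n:ℝ))/(m:ℝ) * (∑ I ∈ P, ((I ∩ S).card : ℝ))
        + (n.choose m : ℝ) * ((k:ℝ)/(n:ℝ))^2 := by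
    rw [Finset.sum_div, Finset.mul_sum, ← hPcard]
    rw [← Finset.sum_sub_distrib, Finset.card_eq_sum_ones P]
    push_cast
    rw [Finset.sum_mul, ← Finset.sum_add_distrib]
    apply Finset.sum_congr rfl
    intro I _
    ring
  -- final inequality
  have hkR : (0:ℝ) ≤ (k:ℝ) := Nat.cast_nonneg k
  have hknR : (k:ℝ) ≤ (n:ℝ) := by
    exact_mod_cast (card_le_card (subset_univ S)).trans_eq (by simp)
  have hkk : (0:ℝ) ≤ (k:ℝ) * ((k:ℝ) - 1) := by
    rcases Nat.eq_zero_or_pos k with h | h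
    · simp [h]
    · have h1 : (1:ℝ) ≤ (k:ℝ) := by exact_mod_cast h
      nlinarith
  have hmR : (1:ℝ) ≤ (m:ℝ) := by exact_mod_cast hm
  have hnR : (2:ℝ) ≤ (n:ℝ) := by exact_mod_cast hn
  have hmnR : (m:ℝ) ≤ (n:ℝ) := by exact_mod_cast hmn
  have hn0 : (n:ℝ) ≠ 0 := by positivity
  have hm0 : (m:ℝ) ≠ 0 := by positivity
  have hn1 : (0:ℝ) < (n:ℝ) - 1 := by linarith
  have ec1 : (c1 : ℝ) = (m:ℝ) * (n.choose m : ℝ) / (n:ℝ) := by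
    rw [eq_div_iff hn0]
    linarith [hrel1]
  have ec2 : (c2 : ℝ) = (m:ℝ) * ((m:ℝ)-1) * (n.choose m : ℝ) / ((n:ℝ) * ((n:ℝ)-1)) := by
    rw [eq_div_iff (by positivity)]
    nlinarith [hrel2]
  have hm0' : (0:ℝ) ≤ (m:ℝ) := by linarith
  have hn0' : (0:ℝ) ≤ (n:ℝ) := by linarith
  have key : (k:ℝ) * ((k:ℝ)-1) * ((m:ℝ)-1) * (n:ℝ) ≤ (k:ℝ)^2 * ((n:ℝ)-1) * (m:ℝ) := by
    nlinarith [mul_nonneg (mul_self_nonneg (k:ℝ)) (sub_nonneg.2 hmnR),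
      mul_nonneg (mul_nonneg hkR hn0') (sub_nonneg.2 hmR)]
  rw [div_le_iff₀ hN, hq, hsum1, hsum2, ec1, ec2]
  set N : ℝ := (n.choose m : ℝ) with hNdef
  clear hX hcount1 hcount2 hsum1 hsum2 hq hPcard
  have diff := algebra_diff (k:ℝ) (n:ℝ) (m:ℝ) N hn0 hm0 (by linarith)
  have hpos : (0:ℝ) ≤ N * ((k:ℝ)^2 * ((n:ℝ)-1) * (m:ℝ) - (k:ℝ) * ((k:ℝ)-1) * ((m:ℝ)-1) * (n:ℝ))
      / ((n:ℝ)^2 * ((n:ℝ)-1) * (m:ℝ)) := by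
    apply div_nonneg
    · exact mul_nonneg hN.le (by linarith)
    · positivity
  linarith [diff, hpos]


/-- The mean squared error of the subsampled joint-type estimate, summed over
all symbol pairs, is at most 1/m. -/
theorem joint_type_estimate_mse
    {𝒳 𝒴 : Type*} [Fintype 𝒳] [Nonempty 𝒳] [Fintype 𝒴] [Nonempty 𝒴]
    [DecidableEq 𝒳] [DecidableEq 𝒴]
    (n m : ℕ) (hn : 2 ≤ n) (hm : 0 < m) (hmn : m ≤ n)
    (x : Fin n → 𝒳) (y : Fin n → 𝒴) :
    ∑ ab : 𝒳 × 𝒴,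
      (∑ I ∈ Finset.powersetCard m (Finset.univ : Finset (Fin n)),
          (((I.filter (fun i => (x i, y i) = ab)).card : ℝ) / (m : ℝ)
            - ((Finset.univ.filter (fun i : Fin n => (x i, y i) = ab)).card : ℝ) / (n : ℝ)) ^ 2)
        / (n.choose m : ℝ)
      ≤ 1 / (m : ℝ) := by
  classical
  have hconv : ∀ (ab : 𝒳 × 𝒴) (I : Finset (Fin n)),
      I.filter (fun i => (x i, y i) = ab)
        = I ∩ (univ.filter (fun i : Fin n => (x i, y i) = ab)) := by
    intro ab I; ext i; simp
  have step1 : ∑ ab : 𝒳 × 𝒴,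
      (∑ I ∈ Finset.powersetCard m (Finset.univ : Finset (Fin n)),
          (((I.filter (fun i => (x i, y i) = ab)).card : ℝ) / (m : ℝ)
            - ((Finset.univ.filter (fun i : Fin n => (x i, y i) = ab)).card : ℝ) / (n : ℝ)) ^ 2)
        / (n.choose m : ℝ)
      ≤ ∑ ab : 𝒳 × 𝒴,
          (((Finset.univ.filter (fun i : Fin n => (x i, y i) = ab)).card : ℝ))
            / ((n : ℝ) * (m : ℝ)) := by
    apply Finset.sum_le_sum
    intro ab _
    have h := per_set hn hm hmn (univ.filter (fun i : Fin n => (x i, y i) = ab))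
    simp_rw [← hconv ab] at h
    exact h
  refine step1.trans ?_
  have hfib : ∑ ab : 𝒳 × 𝒴, (univ.filter (fun i : Fin n => (x i, y i) = ab)).card = n := by
    have h := Finset.card_eq_sum_card_fiberwise
      (f := fun i : Fin n => (x i, y i)) (s := univ) (t := univ)
      (fun i _ => mem_univ _)
    rw [card_univ, Fintype.card_fin] at h
    exact h.symm
  rw [← Finset.sum_div]
  have hcast : ∑ ab : 𝒳 × 𝒴, ((univ.filter (fun i : Fin n => (x i, y i) = ab)).card : ℝ)
      = (n : ℝ) := by
    exact_mod_cast congrArg (Nat.cast : ℕ → ℝ) hfib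
  rw [hcast]
  have hn0 : (n:ℝ) ≠ 0 := by positivity
  have hm0 : (m:ℝ) ≠ 0 := by
    have : 0 < m := hm
    positivity
  have heq : (n:ℝ)/((n:ℝ)*(m:ℝ)) = 1/(m:ℝ) := by
    field_simp
  exact le_of_eq heq
end

section
/- Let 𝒳 and 𝒴 be finite nonempty sets, n ≥ 2 and m positive integers with m ≤ n, and x ∈ 𝒳ⁿ, y ∈ 𝒴ⁿ arbitrary deterministic sequences. Let I be a uniformly random m-element subset of {1,…,n}, and define the joint type estimate P̂_I(a,b) := |{i ∈ I : (x_i,y_i) = (a,b)}|/m. Then the expected L₂ norm of the estimation error satisfies E[ √( Σ_{(a,b) ∈ 𝒳×𝒴} (P̂_I(a,b) − P_{x,y}(a,b))² ) ] ≤ 1/√m. -/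
open Finset in
lemma count_supersets {α : Type*} [DecidableEq α] (s t : Finset α) (m : ℕ)
    (hts : t ⊆ s) (htm : t.card ≤ m) :
    ((Finset.powersetCard m s).filter (fun I => t ⊆ I)).card
      = (s.card - t.card).choose (m - t.card) := by
  have hcard : (s \ t).card = s.card - t.card := Finset.card_sdiff_of_subset hts
  rw [← hcard, ← Finset.card_powersetCard]
  apply Finset.card_bij (fun I _ => I \ t)
  · intro I hI
    simp only [Finset.mem_filter, Finset.mem_powersetCard] at hI
    obtain ⟨⟨hIs, hIc⟩, htI⟩ := hI
    refine Finset.mem_powersetCard.2 ⟨Finset.sdiff_subset_sdiff hIs le_rfl, ?_⟩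
    rw [Finset.card_sdiff_of_subset htI, hIc]
  · intro I hI I' hI' h
    simp only [Finset.mem_filter, Finset.mem_powersetCard] at hI hI'
    rw [← Finset.sdiff_union_of_subset hI.2, ← Finset.sdiff_union_of_subset hI'.2, h]
  · intro J hJ
    simp only [Finset.mem_powersetCard] at hJ
    obtain ⟨hJs, hJc⟩ := hJ
    have hdisj : Disjoint J t := Finset.disjoint_left.2 fun a ha =>
      (Finset.mem_sdiff.1 (hJs ha)).2
    refine ⟨J ∪ t, ?_, ?_⟩
    · simp only [Finset.mem_filter, Finset.mem_powersetCard]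
      refine ⟨⟨Finset.union_subset (hJs.trans Finset.sdiff_subset) hts, ?_⟩,
        Finset.subset_union_right⟩
      rw [Finset.card_union_of_disjoint hdisj, hJc, Nat.sub_add_cancel htm]
    · rw [Finset.union_sdiff_cancel_right hdisj]

open Finset in
lemma card_filter_eq_sum {n : ℕ} (p : Fin n → Prop) [DecidablePred p] (I : Finset (Fin n)) :
    (I.filter p).card = ∑ i ∈ Finset.univ.filter p, if i ∈ I then 1 else 0 := by
  rw [Finset.sum_boole]
  congr 1
  ext i
  simp [Finset.mem_filter, and_comm]

open Finset in
lemma count_mem {n m : ℕ} (hm : 0 < m) (i : Fin n) :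
    ((Finset.powersetCard m (Finset.univ : Finset (Fin n))).filter (fun I => i ∈ I)).card
      = (n - 1).choose (m - 1) := by
  have h := count_supersets (Finset.univ : Finset (Fin n)) {i} m (by simp) (by simp; omega)
  simpa using h

open Finset in
lemma sum_card_filter {n m : ℕ} (hm : 0 < m) (p : Fin n → Prop) [DecidablePred p] :
    ∑ I ∈ Finset.powersetCard m (Finset.univ : Finset (Fin n)), (I.filter p).card
      = (Finset.univ.filter p).card * (n - 1).choose (m - 1) := by
  simp_rw [card_filter_eq_sum p]
  rw [Finset.sum_comm]
  have : ∀ i : Fin n, (∑ I ∈ Finset.powersetCard m (Finset.univ : Finset (Fin n)),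
      if i ∈ I then 1 else 0) = (n - 1).choose (m - 1) := by
    intro i
    rw [Finset.sum_boole]
    simpa using count_mem hm i
  simp [this]

open Finset in
lemma sum_sq_card_filter {n m : ℕ} (hm : 0 < m) (p : Fin n → Prop) [DecidablePred p] :
    ∑ I ∈ Finset.powersetCard m (Finset.univ : Finset (Fin n)), (I.filter p).card ^ 2
      ≤ (Finset.univ.filter p).card * (n - 1).choose (m - 1)
        + ((Finset.univ.filter p).card * (Finset.univ.filter p).card
            - (Finset.univ.filter p).card)
          * (if m = 1 then 0 else (n - 2).choose (m - 2)) := by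
  set A := Finset.univ.filter p with hA
  set K := A.card with hK
  by_cases hm1 : m = 1
  · have hle : ∀ I ∈ Finset.powersetCard m (Finset.univ : Finset (Fin n)),
        (I.filter p).card ^ 2 = (I.filter p).card := by
      intro I hI
      have hIc : I.card = m := (Finset.mem_powersetCard.1 hI).2
      have : (I.filter p).card ≤ 1 := by
        calc (I.filter p).card ≤ I.card := Finset.card_filter_le _ _
        _ = 1 := by rw [hIc, hm1]
      interval_cases h : (I.filter p).card <;> simp
    rw [Finset.sum_congr rfl hle, sum_card_filter hm p]
    simp [hm1]
    exact le_rfl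
  · have hm2 : 2 ≤ m := by omega
    simp only [if_neg hm1]
    have hsq : ∀ I ∈ Finset.powersetCard m (Finset.univ : Finset (Fin n)),
        (I.filter p).card ^ 2
          = ∑ i ∈ A, ∑ j ∈ A, (if i ∈ I ∧ j ∈ I then 1 else 0) := by
      intro I _
      rw [card_filter_eq_sum p, sq, Finset.sum_mul_sum]
      refine Finset.sum_congr rfl fun i _ => Finset.sum_congr rfl fun j _ => ?_
      by_cases hi : i ∈ I <;> by_cases hj : j ∈ I <;> simp [hi, hj]
    rw [Finset.sum_congr rfl hsq, Finset.sum_comm]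
    have hbound : ∀ i ∈ A, (∑ I ∈ Finset.powersetCard m (Finset.univ : Finset (Fin n)),
        ∑ j ∈ A, (if i ∈ I ∧ j ∈ I then 1 else 0))
          ≤ (n - 1).choose (m - 1) + (K - 1) * (n - 2).choose (m - 2) := by
      intro i hi
      rw [Finset.sum_comm]
      have hdiag : (∑ I ∈ Finset.powersetCard m (Finset.univ : Finset (Fin n)),
          (if i ∈ I ∧ i ∈ I then 1 else 0)) = (n - 1).choose (m - 1) := by
        rw [Finset.sum_boole]
        simp only [and_self]
        simpa using count_mem hm i
      have hoff : ∀ j ∈ A.erase i, (∑ I ∈ Finset.powersetCard m (Finset.univ : Finset (Fin n)),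
          (if i ∈ I ∧ j ∈ I then 1 else 0)) = (n - 2).choose (m - 2) := by
        intro j hj
        have hij : j ≠ i := Finset.ne_of_mem_erase hj
        rw [Finset.sum_boole]
        have h := count_supersets (Finset.univ : Finset (Fin n)) {i, j} m (by simp) ?_
        · have hc2 : ({i, j} : Finset (Fin n)).card = 2 := by
            rw [Finset.card_insert_of_notMem (by simp [hij.symm]), Finset.card_singleton]
          simp only [hc2, Finset.card_univ, Fintype.card_fin] at h
          rw [← h]
          norm_cast
          congr 1
          apply Finset.filter_congr
          intro I _
          simp [Finset.insert_subset_iff, Finset.singleton_subset_iff]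
        · rw [Finset.card_insert_of_notMem (by simp [hij.symm]), Finset.card_singleton]
          exact hm2
      rw [← Finset.add_sum_erase A _ hi, hdiag]
      have : (∑ j ∈ A.erase i, ∑ I ∈ Finset.powersetCard m (Finset.univ : Finset (Fin n)),
          (if i ∈ I ∧ j ∈ I then 1 else 0)) = (K - 1) * (n - 2).choose (m - 2) := by
        rw [Finset.sum_congr rfl hoff, Finset.sum_const, smul_eq_mul,
          Finset.card_erase_of_mem hi]
      rw [this]
    calc (∑ i ∈ A, ∑ I ∈ Finset.powersetCard m (Finset.univ : Finset (Fin n)),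
        ∑ j ∈ A, (if i ∈ I ∧ j ∈ I then 1 else 0))
        ≤ ∑ _i ∈ A, ((n - 1).choose (m - 1) + (K - 1) * (n - 2).choose (m - 2)) :=
          Finset.sum_le_sum hbound
      _ = K * (n - 1).choose (m - 1) + (K * K - K) * (n - 2).choose (m - 2) := by
          rw [Finset.sum_const, smul_eq_mul, Nat.mul_add]
          congr 1
          rw [← Nat.mul_assoc, Nat.mul_sub, Nat.mul_one]

lemma choose_id1 {n m : ℕ} (hn : 1 ≤ n) (hm : 1 ≤ m) :
    n * (n - 1).choose (m - 1) = n.choose m * m := by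
  obtain ⟨n', rfl⟩ : ∃ n', n = n' + 1 := ⟨n - 1, by omega⟩
  obtain ⟨m', rfl⟩ : ∃ m', m = m' + 1 := ⟨m - 1, by omega⟩
  simpa using Nat.add_one_mul_choose_eq n' m'

lemma choose_key {n m K : ℕ} (hn : 2 ≤ n) (hm : 1 ≤ m) (hmn : m ≤ n) (hKn : K ≤ n) :
    (K * K - K) * (n ^ 2 * (if m = 1 then 0 else (n - 2).choose (m - 2)))
      ≤ K * K * (m ^ 2 * n.choose m) := by
  by_cases hm1 : m = 1
  · simp [hm1]
  · have hm2 : 2 ≤ m := by omega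
    rw [if_neg hm1]
    set D := (n - 2).choose (m - 2) with hD
    have h1 : (n - 1) * D = (n - 1).choose (m - 1) * (m - 1) := by
      have h := choose_id1 (n := n - 1) (m := m - 1) (by omega) (by omega)
      simpa [hD, show n - 1 - 1 = n - 2 by omega, show m - 1 - 1 = m - 2 by omega] using h
    have h2 : n * (n - 1).choose (m - 1) = n.choose m * m := choose_id1 (by omega) hm
    have hKK : K * K - K = K * (K - 1) := by
      rw [Nat.mul_sub, Nat.mul_one]
    have hstep : (K - 1) * n ≤ K * (n - 1) := by
      calc (K - 1) * n = K * n - n := by rw [Nat.sub_mul, Nat.one_mul]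
        _ ≤ K * n - K := Nat.sub_le_sub_left hKn (K * n)
        _ = K * (n - 1) := by rw [Nat.mul_sub, Nat.mul_one]
    calc (K * K - K) * (n ^ 2 * D)
        = (K * ((K - 1) * n)) * (n * D) := by rw [hKK]; ring
      _ ≤ (K * (K * (n - 1))) * (n * D) :=
          Nat.mul_le_mul (Nat.mul_le_mul le_rfl hstep) le_rfl
      _ = (K * K) * (n * ((n - 1) * D)) := by ring
      _ = (K * K) * (n * ((n - 1).choose (m - 1) * (m - 1))) := by rw [h1]
      _ = (K * K) * ((n.choose m * m) * (m - 1)) := by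
          rw [← Nat.mul_assoc n, h2]
      _ ≤ (K * K) * ((n.choose m * m) * m) :=
          Nat.mul_le_mul le_rfl (Nat.mul_le_mul le_rfl (by omega))
      _ = K * K * (m ^ 2 * n.choose m) := by ring

open Finset in
lemma key_real {n m : ℕ} (hn : 2 ≤ n) (hm : 0 < m) (hmn : m ≤ n)
    (p : Fin n → Prop) [DecidablePred p] :
    ∑ I ∈ Finset.powersetCard m (Finset.univ : Finset (Fin n)),
      (((I.filter p).card : ℝ) / m - ((Finset.univ.filter p).card : ℝ) / n) ^ 2
      ≤ (n.choose m : ℝ) * ((Finset.univ.filter p).card : ℝ) / (m * n) := by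
  have hm' : (0:ℝ) < m := by exact_mod_cast hm
  have hn' : (0:ℝ) < n := by positivity
  set K : ℕ := (Finset.univ.filter p).card with hKdef
  set C1 : ℕ := (n - 1).choose (m - 1) with hC1def
  set Dn : ℕ := if m = 1 then 0 else (n - 2).choose (m - 2) with hDdef
  set N : ℕ := n.choose m with hNdef
  set pc := Finset.powersetCard m (Finset.univ : Finset (Fin n)) with hpcdef
  have hNcard : pc.card = N := by simp [hpcdef, hNdef]
  have hexp : ∀ I ∈ pc, (((I.filter p).card : ℝ) / m - (K : ℝ) / n) ^ 2
      = ((I.filter p).card : ℝ) ^ 2 * (1 / (m:ℝ) ^ 2)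
        - ((I.filter p).card : ℝ) * (2 * K / ((m:ℝ) * n)) + ((K:ℝ) / n) ^ 2 := by
    intro I _
    field_simp
    ring
  rw [Finset.sum_congr rfl hexp, Finset.sum_add_distrib, Finset.sum_sub_distrib,
    ← Finset.sum_mul, ← Finset.sum_mul, Finset.sum_const, hNcard, nsmul_eq_mul]
  set S2 : ℝ := ∑ I ∈ pc, ((I.filter p).card : ℝ) ^ 2 with hS2def
  have hS1 : (∑ I ∈ pc, ((I.filter p).card : ℝ)) = (K : ℝ) * C1 := by
    rw [← Nat.cast_sum, sum_card_filter hm p, Nat.cast_mul]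
  rw [hS1]
  set E : ℝ := ((K * K - K : ℕ) : ℝ) with hEdef
  have hS2 : S2 ≤ (K : ℝ) * C1 + E * Dn := by
    have h := sum_sq_card_filter hm p
    have h' : ((∑ I ∈ pc, (I.filter p).card ^ 2 : ℕ) : ℝ)
        ≤ ((K * C1 + (K * K - K) * Dn : ℕ) : ℝ) := by exact_mod_cast h
    rw [Nat.cast_sum] at h'
    push_cast at h' ⊢
    convert h' using 2
  have hKn : K ≤ n := le_trans (Finset.card_filter_le _ _) (by simp)
  have hC1R : (n:ℝ) * C1 = (N:ℝ) * m := by exact_mod_cast choose_id1 (by omega) hm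
  have hkeyR : E * ((n:ℝ)^2 * Dn) ≤ (K:ℝ) * K * ((m:ℝ)^2 * N) := by
    rw [hEdef, hDdef, hNdef]
    exact_mod_cast choose_key hn hm hmn hKn
  have f1 : (n:ℝ)^2 * S2 ≤ (K:ℝ)*n*((N:ℝ)*m) + (K:ℝ)*K*((m:ℝ)^2*N) := by
    calc (n:ℝ)^2*S2 ≤ (n:ℝ)^2*((K:ℝ)*C1 + E*Dn) := by
          apply mul_le_mul_of_nonneg_left hS2 (by positivity)
      _ = (K:ℝ)*n*((n:ℝ)*C1) + E*((n:ℝ)^2*Dn) := by ring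
      _ = (K:ℝ)*n*((N:ℝ)*m) + E*((n:ℝ)^2*Dn) := by rw [hC1R]
      _ ≤ _ := by linarith [hkeyR]
  have h2C : 2*(K:ℝ)^2*m*((n:ℝ)*C1) = 2*(K:ℝ)^2*m*((N:ℝ)*m) := by rw [hC1R]
  rw [← sub_nonneg]
  have heq : (N:ℝ)*K/(m*n)
      - (S2*(1/(m:ℝ)^2) - (K:ℝ)*C1*(2*K/((m:ℝ)*n)) + (N:ℝ)*((K:ℝ)/n)^2)
      = ((N:ℝ)*K*m*n + 2*(K:ℝ)^2*m*((n:ℝ)*C1) - (N:ℝ)*K^2*m^2 - (n:ℝ)^2*S2)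
        / ((m:ℝ)^2*(n:ℝ)^2) := by
    field_simp
    ring
  rw [heq]
  apply div_nonneg _ (by positivity)
  nlinarith [f1, h2C]

/-- The expected L₂ norm of the joint-type estimation error is at most 1/√m. -/
theorem joint_type_estimate_expected_L2
    {𝒳 𝒴 : Type*} [Fintype 𝒳] [Nonempty 𝒳] [Fintype 𝒴] [Nonempty 𝒴]
    [DecidableEq 𝒳] [DecidableEq 𝒴]
    (n m : ℕ) (hn : 2 ≤ n) (hm : 0 < m) (hmn : m ≤ n)
    (x : Fin n → 𝒳) (y : Fin n → 𝒴) :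
    (∑ I ∈ Finset.powersetCard m (Finset.univ : Finset (Fin n)),
        Real.sqrt (∑ ab : 𝒳 × 𝒴,
          (((I.filter (fun i => (x i, y i) = ab)).card : ℝ) / (m : ℝ)
            - ((Finset.univ.filter (fun i : Fin n => (x i, y i) = ab)).card : ℝ) / (n : ℝ)) ^ 2))
        / (n.choose m : ℝ)
      ≤ 1 / Real.sqrt (m : ℝ) := by
  have hm' : (0:ℝ) < m := by exact_mod_cast hm
  have hN : (0:ℝ) < (n.choose m : ℝ) := by exact_mod_cast Nat.choose_pos hmn
  set pc := Finset.powersetCard m (Finset.univ : Finset (Fin n)) with hpc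
  set S : Finset (Fin n) → ℝ := fun I => ∑ ab : 𝒳 × 𝒴,
    (((I.filter (fun i => (x i, y i) = ab)).card : ℝ) / (m : ℝ)
      - ((Finset.univ.filter (fun i : Fin n => (x i, y i) = ab)).card : ℝ) / (n : ℝ)) ^ 2
    with hSdef
  have hSnn : ∀ I, 0 ≤ S I := fun I => Finset.sum_nonneg fun _ _ => sq_nonneg _
  set T : ℝ := ∑ I ∈ pc, Real.sqrt (S I) with hTdef
  have hT0 : 0 ≤ T := Finset.sum_nonneg fun I _ => Real.sqrt_nonneg _
  have hfib : (∑ ab : 𝒳 × 𝒴,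
      ((Finset.univ.filter (fun i : Fin n => (x i, y i) = ab)).card : ℝ)) = n := by
    have h := Finset.card_eq_sum_card_fiberwise
      (f := fun i : Fin n => (x i, y i)) (s := Finset.univ) (t := Finset.univ)
      (fun i _ => Finset.mem_univ _)
    have : (n : ℝ) = ((Finset.univ : Finset (Fin n)).card : ℝ) := by simp
    rw [this]
    rw [h]
    push_cast
    rfl
  have hsum : ∑ I ∈ pc, S I ≤ (n.choose m : ℝ) / m := by
    rw [hSdef]
    rw [Finset.sum_comm]
    calc (∑ ab : 𝒳 × 𝒴, ∑ I ∈ pc,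
          (((I.filter (fun i => (x i, y i) = ab)).card : ℝ) / (m : ℝ)
            - ((Finset.univ.filter (fun i : Fin n => (x i, y i) = ab)).card : ℝ) / (n : ℝ)) ^ 2)
        ≤ ∑ ab : 𝒳 × 𝒴, (n.choose m : ℝ)
            * ((Finset.univ.filter (fun i : Fin n => (x i, y i) = ab)).card : ℝ) / (m * n) :=
          Finset.sum_le_sum fun ab _ => key_real hn hm hmn (fun i => (x i, y i) = ab)
      _ = (n.choose m : ℝ) / (m * n) * ∑ ab : 𝒳 × 𝒴,
            ((Finset.univ.filter (fun i : Fin n => (x i, y i) = ab)).card : ℝ) := by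
          rw [Finset.mul_sum]
          exact Finset.sum_congr rfl fun ab _ => by ring
      _ = (n.choose m : ℝ) / m := by
          rw [hfib]
          field_simp
  have hpccard : (pc.card : ℝ) = (n.choose m : ℝ) := by simp [hpc]
  have hT2 : T ^ 2 ≤ (n.choose m : ℝ) * ∑ I ∈ pc, S I := by
    have h := sq_sum_le_card_mul_sum_sq (s := pc) (f := fun I => Real.sqrt (S I))
    have h2 : (∑ I ∈ pc, Real.sqrt (S I) ^ 2) = ∑ I ∈ pc, S I :=
      Finset.sum_congr rfl fun I _ => Real.sq_sqrt (hSnn I)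
    rw [h2] at h
    rw [← hpccard]
    exact h
  have hT2' : T ^ 2 ≤ (n.choose m : ℝ) ^ 2 / m := by
    calc T ^ 2 ≤ (n.choose m : ℝ) * ((n.choose m : ℝ) / m) := by
          refine hT2.trans (mul_le_mul_of_nonneg_left hsum hN.le)
      _ = (n.choose m : ℝ) ^ 2 / m := by ring
  have hsm : (0:ℝ) < Real.sqrt m := Real.sqrt_pos.2 hm'
  have hTle : T ≤ (n.choose m : ℝ) / Real.sqrt m := by
    calc T = Real.sqrt (T ^ 2) := (Real.sqrt_sq hT0).symm
      _ ≤ Real.sqrt ((n.choose m : ℝ) ^ 2 / m) := Real.sqrt_le_sqrt hT2'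
      _ = (n.choose m : ℝ) / Real.sqrt m := by
          rw [Real.sqrt_div (by positivity : (0:ℝ) ≤ (n.choose m : ℝ) ^ 2),
            Real.sqrt_sq hN.le]
  rw [div_le_div_iff₀ hN hsm, one_mul]
  exact (le_div_iff₀ hsm).1 hTle
end

section
/- Let 𝒳 and 𝒴 be finite nonempty sets, f₁ : 𝒳 × 𝒴 → ℝ any function, n ≥ 2 and m positive integers with m ≤ n. For every pair of deterministic sequences x ∈ 𝒳ⁿ and y ∈ 𝒴ⁿ, if I is a uniformly random m-element subset of {1,…,n} and F̂_I := (1/m)·Σ_{i ∈ I} f₁(x_i,y_i), then the expected absolute error satisfies E[ |F̂_I − (1/n)·Σ_{i=1}^n f₁(x_i,y_i)| ] ≤ ‖f₁‖₂ / √m, where ‖f₁‖₂ := √(Σ_{(a,b) ∈ 𝒳×𝒴} f₁(a,b)²). In particular, since this holds for all sequences x, y of length n, the maximal (worst-case over sequences) expected absolute error is at most ‖f₁‖₂/√m, independent of n. -/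
open Finset in
lemma card_filter_mem_powersetCard' {α : Type*} [DecidableEq α] (s : Finset α) (a : α)
    (ha : a ∈ s) (k : ℕ) :
    ((powersetCard (k + 1) s).filter (fun I => a ∈ I)).card = (s.card - 1).choose k := by
  rw [← card_erase_of_mem ha, ← card_powersetCard k (s.erase a)]
  apply card_bij (fun I _ => I.erase a)
  · intro I hI
    simp only [mem_filter, mem_powersetCard] at hI
    obtain ⟨⟨hsub, hcard⟩, haI⟩ := hI
    rw [mem_powersetCard]
    refine ⟨erase_subset_erase a hsub, ?_⟩
    rw [card_erase_of_mem haI, hcard]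
    rfl
  · intro I₁ h₁ I₂ h₂ he
    simp only [mem_filter] at h₁ h₂
    rw [← insert_erase h₁.2, ← insert_erase h₂.2, he]
  · intro J hJ
    rw [mem_powersetCard] at hJ
    have haJ : a ∉ J := fun h => (mem_erase.mp (hJ.1 h)).1 rfl
    refine ⟨insert a J, ?_, erase_insert haJ⟩
    simp only [mem_filter, mem_powersetCard]
    exact ⟨⟨insert_subset ha (hJ.1.trans (erase_subset a s)),
      by rw [card_insert_of_notMem haJ, hJ.2]⟩, mem_insert_self a J⟩

open Finset in
lemma card_filter_pair_mem_powersetCard' {α : Type*} [DecidableEq α] (s : Finset α) (a b : α)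
    (hab : a ≠ b) (ha : a ∈ s) (hb : b ∈ s) (k : ℕ) :
    ((powersetCard (k + 2) s).filter (fun I => a ∈ I ∧ b ∈ I)).card = (s.card - 2).choose k := by
  have hb' : b ∈ s.erase a := mem_erase.mpr ⟨hab.symm, hb⟩
  have step : ((powersetCard (k + 2) s).filter (fun I => a ∈ I ∧ b ∈ I)).card
      = ((powersetCard (k + 1) (s.erase a)).filter (fun I => b ∈ I)).card := by
    apply card_bij (fun I _ => I.erase a)
    · intro I hI
      simp only [mem_filter, mem_powersetCard] at hI ⊢
      obtain ⟨⟨hsub, hcard⟩, haI, hbI⟩ := hI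
      refine ⟨⟨erase_subset_erase a hsub, ?_⟩, mem_erase.mpr ⟨hab.symm, hbI⟩⟩
      rw [card_erase_of_mem haI, hcard]
      rfl
    · intro I₁ h₁ I₂ h₂ he
      simp only [mem_filter] at h₁ h₂
      rw [← insert_erase h₁.2.1, ← insert_erase h₂.2.1, he]
    · intro J hJ
      simp only [mem_filter, mem_powersetCard] at hJ
      obtain ⟨⟨hsub, hcard⟩, hbJ⟩ := hJ
      have haJ : a ∉ J := fun h => (mem_erase.mp (hsub h)).1 rfl
      refine ⟨insert a J, ?_, erase_insert haJ⟩
      simp only [mem_filter, mem_powersetCard]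
      exact ⟨⟨insert_subset ha (hsub.trans (erase_subset a s)),
        by rw [card_insert_of_notMem haJ, hcard]⟩, mem_insert_self a J,
        mem_insert_of_mem hbJ⟩
  rw [step, card_filter_mem_powersetCard' (s.erase a) b hb' k, card_erase_of_mem ha, Nat.sub_sub]

open Finset

/-- Accuracy guarantee of Theorem 1: for every pair of deterministic sequences,
the expected absolute error of the estimate from m random subsamples is at most
‖f₁‖₂/√m, independent of n. -/
theorem expected_absolute_error_bound
    {𝒳 𝒴 : Type*} [Fintype 𝒳] [Nonempty 𝒳] [Fintype 𝒴] [Nonempty 𝒴]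
    (f₁ : 𝒳 × 𝒴 → ℝ) (n m : ℕ) (hn : 2 ≤ n) (hm : 0 < m) (hmn : m ≤ n) :
    ∀ (x : Fin n → 𝒳) (y : Fin n → 𝒴),
      (∑ I ∈ Finset.powersetCard m (Finset.univ : Finset (Fin n)),
          |(1 / (m : ℝ)) * ∑ i ∈ I, f₁ (x i, y i)
            - (1 / (n : ℝ)) * ∑ i : Fin n, f₁ (x i, y i)|) / (n.choose m : ℝ)
        ≤ Real.sqrt (∑ ab : 𝒳 × 𝒴, (f₁ ab) ^ 2) / Real.sqrt (m : ℝ) := by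
  intro x y
  classical
  set g : Fin n → ℝ := fun i => f₁ (x i, y i) with hgdef
  set C : ℝ := ∑ ab : 𝒳 × 𝒴, (f₁ ab) ^ 2 with hCdef
  have hC0 : 0 ≤ C := Finset.sum_nonneg fun _ _ => sq_nonneg _
  have hnR : (0:ℝ) < n := by positivity
  have hmR : (0:ℝ) < m := by exact_mod_cast hm
  set P : Finset (Finset (Fin n)) := Finset.powersetCard m Finset.univ with hPdef
  set N : ℕ := n.choose m with hNdef
  have hN : 0 < N := Nat.choose_pos hmn
  have hNR : (0:ℝ) < N := by exact_mod_cast hN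
  have hcardP : P.card = N := by
    rw [hPdef, card_powersetCard, card_univ, Fintype.card_fin]
  set h : Fin n → ℝ := fun i => g i - (∑ j, g j) / n with hhdef
  -- sum of h is zero
  have hsum0 : ∑ i, h i = 0 := by
    simp only [hhdef, Finset.sum_sub_distrib, Finset.sum_const, card_univ, Fintype.card_fin,
      nsmul_eq_mul]
    field_simp
    ring
  -- choose identity
  set A : ℕ := (n-1).choose (m-1) with hAdef
  have hnA : (n : ℝ) * A = (N : ℝ) * m := by
    have hnat : n * ((n-1).choose (m-1)) = n.choose m * m := by
      obtain ⟨n', rfl⟩ : ∃ n', n = n' + 1 := ⟨n - 1, by omega⟩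
      obtain ⟨m', rfl⟩ : ∃ m', m = m' + 1 := ⟨m - 1, by omega⟩
      simpa using Nat.add_one_mul_choose_eq n' m'
    exact_mod_cast congrArg (Nat.cast : ℕ → ℝ) hnat
  -- counting values
  have hdiag : ∀ i : Fin n, ((P.filter (fun I => i ∈ I)).card : ℝ) = (A:ℝ) := by
    intro i
    obtain ⟨m', rfl⟩ : ∃ m', m = m' + 1 := ⟨m - 1, by omega⟩
    rw [hPdef, card_filter_mem_powersetCard' _ i (mem_univ i) m', card_univ, Fintype.card_fin]
    simp [hAdef]
  set B : ℝ := if m = 1 then 0 else ((n-2).choose (m-2) : ℝ) with hBdef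
  have hB0 : 0 ≤ B := by
    rw [hBdef]; split <;> positivity
  have hoff : ∀ i j : Fin n, i ≠ j → ((P.filter (fun I => i ∈ I ∧ j ∈ I)).card : ℝ) = B := by
    intro i j hij
    rcases eq_or_ne m 1 with hm1 | hm1
    · rw [hBdef, if_pos hm1]
      norm_cast
      rw [Finset.card_eq_zero, Finset.filter_eq_empty_iff]
      rintro I hI ⟨hi, hj⟩
      rw [hPdef, mem_powersetCard] at hI
      have : 1 < I.card := Finset.one_lt_card.mpr ⟨i, hi, j, hj, hij⟩
      omega
    · obtain ⟨m', rfl⟩ : ∃ m', m = m' + 2 := ⟨m - 2, by omega⟩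
      rw [hBdef, if_neg hm1, hPdef,
        card_filter_pair_mem_powersetCard' _ i j hij (mem_univ i) (mem_univ j) m',
        card_univ, Fintype.card_fin]
      norm_num
  -- second moment computation
  have hS2 : ∑ I ∈ P, (∑ i ∈ I, h i)^2 ≤ (A:ℝ) * ∑ i, (h i)^2 := by
    have expand : ∀ I : Finset (Fin n), (∑ i ∈ I, h i)^2
        = ∑ i, ∑ j, (if i ∈ I then h i else 0) * (if j ∈ I then h j else 0) := by
      intro I
      rw [sq, ← Finset.sum_mul_sum]
      congr 1 <;> rw [Finset.sum_ite_mem, Finset.univ_inter]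
    calc ∑ I ∈ P, (∑ i ∈ I, h i)^2
        = ∑ i, ∑ j, (h i * h j) * ((P.filter (fun I => i ∈ I ∧ j ∈ I)).card : ℝ) := by
          simp_rw [expand]
          rw [Finset.sum_comm]
          refine Finset.sum_congr rfl fun i _ => ?_
          rw [Finset.sum_comm]
          refine Finset.sum_congr rfl fun j _ => ?_
          simp_rw [ite_zero_mul_ite_zero]
          rw [Finset.sum_ite, Finset.sum_const, Finset.sum_const_zero, add_zero,
            nsmul_eq_mul, mul_comm]
      _ = ∑ i, ((h i * h i) * (A:ℝ) + ∑ j ∈ Finset.univ.erase i, (h i * h j) * B) := by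
          refine Finset.sum_congr rfl fun i _ => ?_
          rw [← Finset.add_sum_erase _ _ (mem_univ i)]
          congr 1
          · have heq : P.filter (fun I => i ∈ I ∧ i ∈ I) = P.filter (fun I => i ∈ I) :=
              Finset.filter_congr (fun I _ => by simp)
            rw [heq, hdiag i]
          · exact Finset.sum_congr rfl fun j hj => by
              rw [hoff i j (Ne.symm (Finset.ne_of_mem_erase hj))]
      _ = (A:ℝ) * ∑ i, (h i)^2 - B * ∑ i, (h i)^2 := by
          rw [Finset.sum_add_distrib]
          have key2 : ∀ i : Fin n, ∑ j ∈ Finset.univ.erase i, (h i * h j) * B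
              = -((h i)^2 * B) := by
            intro i
            have e1 : ∑ j ∈ Finset.univ.erase i, h j = - h i := by
              have := Finset.sum_erase_add Finset.univ h (mem_univ i)
              rw [hsum0] at this
              linarith
            calc ∑ j ∈ Finset.univ.erase i, (h i * h j) * B
                = (∑ j ∈ Finset.univ.erase i, h j) * (h i * B) := by
                  rw [Finset.sum_mul]
                  exact Finset.sum_congr rfl fun j _ => by ring
              _ = -((h i)^2 * B) := by rw [e1]; ring
          rw [Finset.sum_congr rfl fun i _ => key2 i]
          have e2 : ∑ i : Fin n, (h i * h i) * (A:ℝ) = (A:ℝ) * ∑ i, (h i)^2 := by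
            rw [Finset.mul_sum]
            exact Finset.sum_congr rfl fun i _ => by ring
          have e3 : ∑ i : Fin n, -((h i)^2 * B) = -(B * ∑ i, (h i)^2) := by
            rw [Finset.sum_neg_distrib, Finset.mul_sum]
            congr 1
            exact Finset.sum_congr rfl fun i _ => by ring
          rw [e2, e3]
          ring
      _ ≤ (A:ℝ) * ∑ i, (h i)^2 := by
          have : 0 ≤ B * ∑ i, (h i)^2 :=
            mul_nonneg hB0 (Finset.sum_nonneg fun _ _ => sq_nonneg _)
          linarith
  -- bound sum of h squares
  have hhg : ∑ i, (h i)^2 ≤ (n:ℝ) * C := by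
    have h1 : ∑ i, (h i)^2 ≤ ∑ i, (g i)^2 := by
      have hsq : ∑ i, (h i)^2 = ∑ i, (g i)^2 - (∑ i, g i)^2 / n := by
        have expand2 : ∀ i : Fin n, (h i)^2
            = (g i)^2 - g i * (2 * ((∑ j, g j)/n)) + ((∑ j, g j)/n)^2 := by
          intro i; simp only [hhdef]; ring
        rw [Finset.sum_congr rfl fun i _ => expand2 i]
        rw [Finset.sum_add_distrib, Finset.sum_sub_distrib, ← Finset.sum_mul,
          Finset.sum_const, card_univ, Fintype.card_fin, nsmul_eq_mul]
        field_simp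
        ring
      rw [hsq]
      have : 0 ≤ (∑ i, g i)^2 / n := by positivity
      linarith
    refine h1.trans ?_
    have h2 : ∀ i : Fin n, (g i)^2 ≤ C :=
      fun i => Finset.single_le_sum (f := fun ab => (f₁ ab)^2)
        (fun _ _ => sq_nonneg _) (mem_univ (x i, y i))
    calc ∑ i, (g i)^2 ≤ ∑ _i : Fin n, C := Finset.sum_le_sum fun i _ => h2 i
      _ = (n:ℝ) * C := by rw [Finset.sum_const, card_univ, Fintype.card_fin, nsmul_eq_mul]
  -- rewrite LHS
  have hrw : ∀ I ∈ P, |(1 / (m : ℝ)) * ∑ i ∈ I, g i - (1 / (n : ℝ)) * ∑ i, g i|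
      = |(1 / (m : ℝ)) * ∑ i ∈ I, h i| := by
    intro I hI
    rw [hPdef, mem_powersetCard] at hI
    congr 1
    simp only [hhdef, Finset.sum_sub_distrib, Finset.sum_const, hI.2, nsmul_eq_mul]
    field_simp
  rw [Finset.sum_congr rfl hrw]
  -- Cauchy-Schwarz and conclude
  set T : ℝ := ∑ I ∈ P, |(1 / (m : ℝ)) * ∑ i ∈ I, h i| with hTdef
  have hT0 : 0 ≤ T := Finset.sum_nonneg fun _ _ => abs_nonneg _
  have hCS : T^2 ≤ (N:ℝ) * ∑ I ∈ P, ((1 / (m : ℝ)) * ∑ i ∈ I, h i)^2 := by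
    have := sq_sum_le_card_mul_sum_sq (s := P) (f := fun I => |(1 / (m : ℝ)) * ∑ i ∈ I, h i|)
    simp_rw [sq_abs] at this
    rwa [hcardP] at this
  have hsum2 : ∑ I ∈ P, ((1 / (m : ℝ)) * ∑ i ∈ I, h i)^2 ≤ (N:ℝ) * C / m := by
    calc ∑ I ∈ P, ((1 / (m : ℝ)) * ∑ i ∈ I, h i)^2
        = (1/(m:ℝ))^2 * ∑ I ∈ P, (∑ i ∈ I, h i)^2 := by
          simp_rw [mul_pow, ← Finset.mul_sum]
      _ ≤ (1/(m:ℝ))^2 * ((A:ℝ) * ((n:ℝ) * C)) := by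
          gcongr
          calc ∑ I ∈ P, (∑ i ∈ I, h i)^2 ≤ (A:ℝ) * ∑ i, (h i)^2 := hS2
            _ ≤ (A:ℝ) * ((n:ℝ) * C) := by gcongr
      _ = (1/(m:ℝ))^2 * (((n:ℝ) * (A:ℝ)) * C) := by ring
      _ = (1/(m:ℝ))^2 * (((N:ℝ) * (m:ℝ)) * C) := by rw [hnA]
      _ = (N:ℝ) * C / m := by field_simp
  have hfinal : (T / N)^2 ≤ C / m := by
    have h1 : T^2 ≤ (N:ℝ) * ((N:ℝ) * C / m) :=
      hCS.trans (mul_le_mul_of_nonneg_left hsum2 hNR.le)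
    rw [div_pow, div_le_div_iff₀ (by positivity) hmR]
    calc T^2 * m ≤ ((N:ℝ) * ((N:ℝ) * C / m)) * m :=
          mul_le_mul_of_nonneg_right h1 hmR.le
      _ = C * (N:ℝ)^2 := by field_simp
  calc T / (N:ℝ) = Real.sqrt ((T / N)^2) := by
        rw [Real.sqrt_sq (by positivity)]
    _ ≤ Real.sqrt (C / m) := Real.sqrt_le_sqrt hfinal
    _ = Real.sqrt C / Real.sqrt m := Real.sqrt_div hC0 _
end
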